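/- arXiv:2007.06332 — 2 statements merged into one kernel-verified Lean document; each statement's English description precedes it below -/
import Mathlib

section
/- Let k₁, k₂ be real constants, let β : ℝ → ℝ³ be a function, and let z, z_d : ℝ → ℝ³ be twice differentiable curves satisfying ‖z(t)‖ = ‖z_d(t)‖ = 1, ⟨z(t), ż(t)⟩ = 0, and ⟨z_d(t), ż_d(t)⟩ = 0 for all t. Define v_e := ż − (z_d × ż_d) × z and FF := ⟨z, z_d × ż_d⟩·(z × ż) + (z_d × z̈_d) × z. If z solves z̈ = −‖ż‖²·z − k₁·(z × (z × z_d)) − k₂·v_e + FF − z × (z × β(t)), then the tracking Lyapunov function V₂(t) = k₁·(1 − ⟨z(t), z_d(t)⟩) + (1/2)·‖v_e(t)‖² satisfies dV₂/dt = −k₂·‖v_e(t)‖² − ⟨z × (z × β(t)), v_e(t)⟩ for all t. -/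
open scoped InnerProductSpace

noncomputable section

/-- ℝ³ with the Euclidean inner product and norm. -/
abbrev E3 := EuclideanSpace ℝ (Fin 3)

/-- The cross product on ℝ³. -/
def cross (a b : E3) : E3 :=
  WithLp.toLp 2 ![a 1 * b 2 - a 2 * b 1, a 2 * b 0 - a 0 * b 2, a 0 * b 1 - a 1 * b 0]

lemma cross_apply0 (a b : E3) : cross a b 0 = a 1 * b 2 - a 2 * b 1 := rfl
lemma cross_apply1 (a b : E3) : cross a b 1 = a 2 * b 0 - a 0 * b 2 := rfl
lemma cross_apply2 (a b : E3) : cross a b 2 = a 0 * b 1 - a 1 * b 0 := rfl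

lemma inner3 (a b : E3) : ⟪a, b⟫_ℝ = a 0 * b 0 + a 1 * b 1 + a 2 * b 2 := by
  simp [PiLp.inner_apply, Fin.sum_univ_three, RCLike.inner_apply]; ring

lemma hasDerivAt_coord {f : ℝ → E3} {f' : E3} {t : ℝ} (h : HasDerivAt f f' t) (i : Fin 3) :
    HasDerivAt (fun s => f s i) (f' i) t :=
  (EuclideanSpace.proj (𝕜 := ℝ) i).hasFDerivAt.comp_hasDerivAt t h

lemma hasDerivAt_E3 {f : ℝ → E3} {f' : E3} {t : ℝ}
    (h : ∀ i, HasDerivAt (fun s => f s i) (f' i) t) : HasDerivAt f f' t := by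
  have h2 : HasDerivAt (fun s => (fun i => f s i : Fin 3 → ℝ)) (fun i => f' i) t :=
    hasDerivAt_pi.2 h
  exact ((EuclideanSpace.equiv (Fin 3) ℝ).symm.toContinuousLinearMap.hasFDerivAt.comp_hasDerivAt t h2 : _)

lemma add_apply3 (x y : E3) (i : Fin 3) : (x + y) i = x i + y i := rfl

lemma hasDerivAt_cross {a b : ℝ → E3} {a' b' : E3} {t : ℝ}
    (ha : HasDerivAt a a' t) (hb : HasDerivAt b b' t) :
    HasDerivAt (fun s => cross (a s) (b s)) (cross a' (b t) + cross (a t) b') t := by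
  apply hasDerivAt_E3
  intro i
  fin_cases i
  · have h := ((hasDerivAt_coord ha 1).mul (hasDerivAt_coord hb 2)).sub
      ((hasDerivAt_coord ha 2).mul (hasDerivAt_coord hb 1))
    have hval : (cross a' (b t) + cross (a t) b') 0 =
        a' 1 * b t 2 + a t 1 * b' 2 - (a' 2 * b t 1 + a t 2 * b' 1) := by
      rw [add_apply3, cross_apply0, cross_apply0]; ring
    rw [show ((⟨0, by norm_num⟩ : Fin 3)) = (0 : Fin 3) from rfl, hval]
    exact h
  · have h := ((hasDerivAt_coord ha 2).mul (hasDerivAt_coord hb 0)).sub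
      ((hasDerivAt_coord ha 0).mul (hasDerivAt_coord hb 2))
    have hval : (cross a' (b t) + cross (a t) b') 1 =
        a' 2 * b t 0 + a t 2 * b' 0 - (a' 0 * b t 2 + a t 0 * b' 2) := by
      rw [add_apply3, cross_apply1, cross_apply1]; ring
    rw [show ((⟨1, by norm_num⟩ : Fin 3)) = (1 : Fin 3) from rfl, hval]
    exact h
  · have h := ((hasDerivAt_coord ha 0).mul (hasDerivAt_coord hb 1)).sub
      ((hasDerivAt_coord ha 1).mul (hasDerivAt_coord hb 0))
    have hval : (cross a' (b t) + cross (a t) b') 2 =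
        a' 0 * b t 1 + a t 0 * b' 1 - (a' 1 * b t 0 + a t 1 * b' 0) := by
      rw [add_apply3, cross_apply2, cross_apply2]; ring
    rw [show ((⟨2, by norm_num⟩ : Fin 3)) = (2 : Fin 3) from rfl, hval]
    exact h

lemma sub_apply3 (x y : E3) (i : Fin 3) : (x - y) i = x i - y i := rfl
lemma smul_apply3 (r : ℝ) (x : E3) (i : Fin 3) : (r • x) i = r * x i := rfl
lemma neg_apply3 (x : E3) (i : Fin 3) : (-x) i = -(x i) := rfl

set_option maxRecDepth 10000 in
/-- For curves z, z_d on the unit 2-sphere, with velocity error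
`v_e = ż − (z_d × ż_d) × z` and feedforward
`FF = ⟨z, z_d × ż_d⟩ (z × ż) + (z_d × z̈_d) × z`, if z solves
`z̈ = −‖ż‖²z − k₁ (z × (z × z_d)) − k₂ v_e + FF − z × (z × β(t))`,
then the tracking Lyapunov function `V₂ = k₁ (1 − ⟨z, z_d⟩) + ½‖v_e‖²` satisfies
`V̇₂ = −k₂‖v_e‖² − ⟨z × (z × β(t)), v_e⟩`. -/
theorem lyapunov_derivative_tracking_with_beta
    (k₁ k₂ : ℝ) (β : ℝ → E3)
    (z zd : ℝ → E3)
    (hz : Differentiable ℝ z) (hz' : Differentiable ℝ (deriv z))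
    (hzd : Differentiable ℝ zd) (hzd' : Differentiable ℝ (deriv zd))
    (hsph : ∀ t, ‖z t‖ = 1) (hsphd : ∀ t, ‖zd t‖ = 1)
    (horth : ∀ t, ⟪z t, deriv z t⟫_ℝ = 0)
    (horthd : ∀ t, ⟪zd t, deriv zd t⟫_ℝ = 0)
    (ve : ℝ → E3)
    (hve : ∀ t, ve t = deriv z t - cross (cross (zd t) (deriv zd t)) (z t))
    (FF : ℝ → E3)
    (hFF : ∀ t, FF t = ⟪z t, cross (zd t) (deriv zd t)⟫_ℝ • cross (z t) (deriv z t) +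
      cross (cross (zd t) (deriv (deriv zd) t)) (z t))
    (heqn : ∀ t, deriv (deriv z) t =
      -(‖deriv z t‖ ^ 2 • z t) - k₁ • cross (z t) (cross (z t) (zd t)) -
        k₂ • ve t + FF t - cross (z t) (cross (z t) (β t))) :
    ∀ t, HasDerivAt (fun s => k₁ * (1 - ⟪z s, zd s⟫_ℝ) + (1 / 2) * ‖ve s‖ ^ 2)
        (-(k₂ * ‖ve t‖ ^ 2) - ⟪cross (z t) (cross (z t) (β t)), ve t⟫_ℝ) t := by
  intro t
  have hzD : HasDerivAt z (deriv z t) t := (hz t).hasDerivAt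
  have hz'D : HasDerivAt (deriv z) (deriv (deriv z) t) t := (hz' t).hasDerivAt
  have hzdD : HasDerivAt zd (deriv zd t) t := (hzd t).hasDerivAt
  have hzd'D : HasDerivAt (deriv zd) (deriv (deriv zd) t) t := (hzd' t).hasDerivAt
  have hveF : ve = fun s => deriv z s - cross (cross (zd s) (deriv zd s)) (z s) := funext hve
  have hveD : HasDerivAt ve
      (deriv (deriv z) t -
        (cross (cross (deriv zd t) (deriv zd t) + cross (zd t) (deriv (deriv zd) t)) (z t) +
          cross (cross (zd t) (deriv zd t)) (deriv z t))) t := by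
    rw [hveF]
    exact hz'D.sub (hasDerivAt_cross (hasDerivAt_cross hzdD hzd'D) hzD)
  have h1 : HasDerivAt (fun s => ⟪z s, zd s⟫_ℝ) (⟪z t, deriv zd t⟫_ℝ + ⟪deriv z t, zd t⟫_ℝ) t :=
    hzD.inner ℝ hzdD
  have h2 := hveD.inner ℝ hveD
  have key := (((hasDerivAt_const t (1 : ℝ)).sub h1).const_mul k₁).add (h2.const_mul ((1:ℝ) / 2))
  have funeq : (fun s => k₁ * (1 - ⟪z s, zd s⟫_ℝ) + (1 / 2) * ‖ve s‖ ^ 2)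
      = fun s => k₁ * ((1:ℝ) - ⟪z s, zd s⟫_ℝ) + (1 / 2) * ⟪ve s, ve s⟫_ℝ := by
    funext s; rw [real_inner_self_eq_norm_sq]
  rw [funeq]
  refine key.congr_deriv ?_
  symm
  have P1 := horth t
  have P2 := horthd t
  have P3 : ⟪z t, z t⟫_ℝ = 1 := by rw [real_inner_self_eq_norm_sq, hsph t]; norm_num
  have P4 : ⟪zd t, zd t⟫_ℝ = 1 := by rw [real_inner_self_eq_norm_sq, hsphd t]; norm_num
  rw [inner3] at P1 P2 P3 P4
  rw [heqn t, hFF t, hve t, ← real_inner_self_eq_norm_sq, ← real_inner_self_eq_norm_sq]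
  simp only [inner3, cross_apply0, cross_apply1, cross_apply2, add_apply3, sub_apply3,
    smul_apply3, neg_apply3]
  linear_combination (-(((zd t 1 * deriv zd t 2 - zd t 2 * deriv zd t 1)^2 + (zd t 2 * deriv zd t 0 - zd t 0 * deriv zd t 2)^2 + (zd t 0 * deriv zd t 1 - zd t 1 * deriv zd t 0)^2) - (z t 0 * (zd t 1 * deriv zd t 2 - zd t 2 * deriv zd t 1) + z t 1 * (zd t 2 * deriv zd t 0 - zd t 0 * deriv zd t 2) + z t 2 * (zd t 0 * deriv zd t 1 - zd t 1 * deriv zd t 0))^2 - (deriv z t 0 * deriv z t 0 + deriv z t 1 * deriv z t 1 + deriv z t 2 * deriv z t 2) - k₁ * (z t 0 * zd t 0 + z t 1 * zd t 1 + z t 2 * zd t 2))) * P1 + (-(-(k₁ * (z t 0 * z t 0 + z t 1 * z t 1 + z t 2 * z t 2) * (zd t 0 * z t 0 + zd t 1 * z t 1 + zd t 2 * z t 2)))) * P2 + (-(k₁ * (zd t 0 * deriv z t 0 + zd t 1 * deriv z t 1 + zd t 2 * deriv z t 2) + k₁ * (z t 0 * deriv zd t 0 + z t 1 * deriv zd t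 1 + z t 2 * deriv zd t 2) * (zd t 0 * zd t 0 + zd t 1 * zd t 1 + zd t 2 * zd t 2) + (z t 0 * (zd t 1 * deriv zd t 2 - zd t 2 * deriv zd t 1) + z t 1 * (zd t 2 * deriv zd t 0 - zd t 0 * deriv zd t 2) + z t 2 * (zd t 0 * deriv zd t 1 - zd t 1 * deriv zd t 0)) * (deriv z t 0 * (zd t 1 * deriv zd t 2 - zd t 2 * deriv zd t 1) + deriv z t 1 * (zd t 2 * deriv zd t 0 - zd t 0 * deriv zd t 2) + deriv z t 2 * (zd t 0 * deriv zd t 1 - zd t 1 * deriv zd t 0)))) * P3 + (-(k₁ * (z t 0 * deriv zd t 0 + z t 1 * deriv zd t 1 + z t 2 * deriv zd t 2))) * P4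
end
end

section
/- Let φ, φ_d : ℝ → ℝ³ be twice differentiable curves with ‖φ(t)‖ = 1 and ⟨φ(t), φ̇(t)⟩ = 0 for all t. Let T(t) := (φ_d(t) × φ̇_d(t)) × φ(t) be the transported reference velocity. Then the orthogonal projection of Ṫ(t) onto the tangent plane at φ(t) satisfies Ṫ − ⟨Ṫ, φ⟩·φ = ⟨φ, φ_d × φ̇_d⟩·(φ × φ̇) + (φ_d × φ̈_d) × φ; i.e., the covariant derivative ∇_{φ̇}(τ(φ, φ_d)φ̇_d) along φ equals ⟨φ, φ_d × φ̇_d⟩(φ × φ̇) + (φ_d × φ̈_d) × φ. -/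
open scoped InnerProductSpace

noncomputable section

private def crossL : E3 →ₗ[ℝ] E3 →ₗ[ℝ] E3 :=
  LinearMap.mk₂ ℝ cross
    (by intro a a' b; ext i; fin_cases i <;>
      simp [cross, PiLp.add_apply] <;> ring)
    (by intro c a b; ext i; fin_cases i <;>
      simp [cross, PiLp.smul_apply, smul_eq_mul] <;> ring)
    (by intro a b b'; ext i; fin_cases i <;>
      simp [cross, PiLp.add_apply] <;> ring)
    (by intro c a b; ext i; fin_cases i <;>
      simp [cross, PiLp.smul_apply, smul_eq_mul] <;> ring)

private def crossCLM : E3 →L[ℝ] E3 →L[ℝ] E3 :=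
  LinearMap.toContinuousLinearMap
    { toFun := fun a => LinearMap.toContinuousLinearMap (crossL a)
      map_add' := by intro a b; ext v; simp
      map_smul' := by intro c a; ext v; simp }

private lemma crossCLM_apply (a b : E3) : crossCLM a b = cross a b := rfl

private lemma hasDerivAt_cross_s8 {f g : ℝ → E3} {f' g' : E3} {t : ℝ}
    (hf : HasDerivAt f f' t) (hg : HasDerivAt g g' t) :
    HasDerivAt (fun s => cross (f s) (g s)) (cross f' (g t) + cross (f t) g') t := by
  have h := (crossCLM.hasFDerivAt.comp_hasDerivAt t hf).clm_apply hg
  simpa [crossCLM_apply] using h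

private lemma key_cross_identity (a b c w v : E3)
    (hd : w 0 * v 0 + w 1 * v 1 + w 2 * v 2 = 0)
    (hs : w 0 * w 0 + w 1 * w 1 + w 2 * w 2 = 1) :
    cross (cross b b + cross a c) w + cross (cross a b) v
      - ⟪cross (cross b b + cross a c) w + cross (cross a b) v, w⟫_ℝ • w
    = ⟪w, cross a b⟫_ℝ • cross w v + cross (cross a c) w := by
  ext i
  fin_cases i <;>
    simp [cross, PiLp.add_apply, PiLp.sub_apply, PiLp.smul_apply,
      PiLp.inner_apply, RCLike.inner_apply, Fin.sum_univ_three, smul_eq_mul]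
  · linear_combination
      (-(w 1 * (a 0 * b 1 - a 1 * b 0) - w 2 * (a 2 * b 0 - a 0 * b 2))) * hd +
      (-((a 2 * b 0 - a 0 * b 2) * v 2 - (a 0 * b 1 - a 1 * b 0) * v 1)) * hs
  · linear_combination
      (-(w 2 * (a 1 * b 2 - a 2 * b 1) - w 0 * (a 0 * b 1 - a 1 * b 0))) * hd +
      (-((a 0 * b 1 - a 1 * b 0) * v 0 - (a 1 * b 2 - a 2 * b 1) * v 2)) * hs
  · linear_combination
      (-(w 0 * (a 2 * b 0 - a 0 * b 2) - w 1 * (a 1 * b 2 - a 2 * b 1))) * hd +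
      (-((a 1 * b 2 - a 2 * b 1) * v 1 - (a 2 * b 0 - a 0 * b 2) * v 0)) * hs

/-- For twice differentiable curves φ, φ_d with φ on the unit sphere
(`‖φ‖ = 1`, `⟨φ, φ̇⟩ = 0`), the transported reference velocity
`T = (φ_d × φ̇_d) × φ` satisfies
`Ṫ − ⟨Ṫ, φ⟩ φ = ⟨φ, φ_d × φ̇_d⟩ (φ × φ̇) + (φ_d × φ̈_d) × φ`,
i.e. the covariant derivative `∇_{φ̇}(τ(φ,φ_d)φ̇_d)` equals the stated feedforward
term. -/
theorem covariant_derivative_of_transported_velocity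
    (φ φd : ℝ → E3)
    (hφ : Differentiable ℝ φ) (hφ' : Differentiable ℝ (deriv φ))
    (hφd : Differentiable ℝ φd) (hφd' : Differentiable ℝ (deriv φd))
    (hsph : ∀ t, ‖φ t‖ = 1)
    (horth : ∀ t, ⟪φ t, deriv φ t⟫_ℝ = 0)
    (T : ℝ → E3)
    (hT : ∀ t, T t = cross (cross (φd t) (deriv φd t)) (φ t)) :
    ∀ t, deriv T t - ⟪deriv T t, φ t⟫_ℝ • φ t =
      ⟪φ t, cross (φd t) (deriv φd t)⟫_ℝ • cross (φ t) (deriv φ t) +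
        cross (cross (φd t) (deriv (deriv φd) t)) (φ t) := by
  intro t
  have hTfun : T = fun s => cross (cross (φd s) (deriv φd s)) (φ s) := funext hT
  have hder : HasDerivAt T
      (cross (cross (deriv φd t) (deriv φd t) + cross (φd t) (deriv (deriv φd) t)) (φ t)
        + cross (cross (φd t) (deriv φd t)) (deriv φ t)) t := by
    rw [hTfun]
    exact hasDerivAt_cross_s8 (hasDerivAt_cross_s8 (hφd t).hasDerivAt (hφd' t).hasDerivAt)
      (hφ t).hasDerivAt
  have hdT : deriv T t =
      cross (cross (deriv φd t) (deriv φd t) + cross (φd t) (deriv (deriv φd) t)) (φ t)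
        + cross (cross (φd t) (deriv φd t)) (deriv φ t) := hder.deriv
  have hd : φ t 0 * deriv φ t 0 + φ t 1 * deriv φ t 1 + φ t 2 * deriv φ t 2 = 0 := by
    have := horth t
    simpa [PiLp.inner_apply, RCLike.inner_apply, Fin.sum_univ_three, mul_comm] using this
  have hs : φ t 0 * φ t 0 + φ t 1 * φ t 1 + φ t 2 * φ t 2 = 1 := by
    have h1 : ⟪φ t, φ t⟫_ℝ = 1 := by
      rw [real_inner_self_eq_norm_mul_norm, hsph t]; ring
    rw [PiLp.inner_apply, Fin.sum_univ_three] at h1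
    simpa [RCLike.inner_apply, mul_comm, ← pow_two] using h1
  rw [hdT]
  exact key_cross_identity (φd t) (deriv φd t) (deriv (deriv φd) t) (φ t) (deriv φ t) hd hs
end
end
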